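/- Let 0 < q, p < ∞ and set 1/r := |1/q − 1/p| (with r = ∞ when q = p). For every v ∈ ℂ^{D₁×D₂}, define ‖v‖_{ℓ_q[ℓ_p]} := (∑_{i=1}^{D₁} (∑_{j=1}^{D₂} |v_{ij}|^p)^{q/p})^{1/q}. Then: (i) if q ≤ p, ‖v‖_{ℓ_q[ℓ_p]} equals the infimum, over vectors a, b ∈ [0,∞)^{D₁} such that a_i > 0 and b_i > 0 for every index i whose row v_{i·} is nonzero, of ‖a‖_{ℓ_{2r}} · ‖b‖_{ℓ_{2r}} · ‖w‖_{ℓ_p}, where w ∈ ℂ^{D₁×D₂} has entries w_{ij} := v_{ij}/(a_i b_i) when v_{ij} ≠ 0 and w_{ij} := 0 otherwise; (ii) if q ≥ p, ‖v‖_{ℓ_q[ℓ_p]} equals the supremum, over nonzero vectors a, b ∈ ℂ^{D₁}, of ‖a‖_{ℓ_{2r}}^{-1} · ‖b‖_{ℓ_{2r}}^{-1} · ‖u‖_{ℓ_p}, where u ∈ ℂ^{D₁×D₂} has entries u_{ij} := a_i v_{ij} b_i. -/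

import Mathlib

open scoped ENNReal ComplexOrder
open Matrix Kronecker

noncomputable section

/-- Singular values of a complex square matrix: the square roots of the eigenvalues of `Xᴴ * X`. -/
def singularValues {ι : Type*} [Fintype ι] [DecidableEq ι] (X : Matrix ι ι ℂ) : ι → ℝ :=
  fun i => Real.sqrt ((Matrix.isHermitian_conjTranspose_mul_self X).eigenvalues i)

/-- Schatten `p` quasi-norm for `p ∈ (0,∞]`; for `p = ∞` the operator norm (largest singular
value). -/
def schattenNorm {ι : Type*} [Fintype ι] [DecidableEq ι] (p : ℝ≥0∞) (X : Matrix ι ι ℂ) : ℝ :=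
  if p = ∞ then ⨆ i, singularValues X i
  else (∑ i, singularValues X i ^ p.toReal) ^ (1 / p.toReal)

/-- `|1/q - 1/p|` computed in `ℝ≥0∞`. -/
def recipGap (q p : ℝ≥0∞) : ℝ≥0∞ := max (1 / q - 1 / p) (1 / p - 1 / q)

/-- The 2-indexed Schatten quasi-norm `‖·‖_{(q,p)}` on matrices over a product index type. -/
def schatten2 {ι₁ ι₂ : Type*} [Fintype ι₁] [DecidableEq ι₁] [Fintype ι₂] [DecidableEq ι₂]
    (q p : ℝ≥0∞) (X : Matrix (ι₁ × ι₂) (ι₁ × ι₂) ℂ) : ℝ :=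
  if q ≤ p then
    sInf { c | ∃ (a b : Matrix ι₁ ι₁ ℂ) (Z : Matrix (ι₁ × ι₂) (ι₁ × ι₂) ℂ),
      X = (a ⊗ₖ (1 : Matrix ι₂ ι₂ ℂ)) * Z * (b ⊗ₖ (1 : Matrix ι₂ ι₂ ℂ)) ∧
      c = schattenNorm (2 * (recipGap q p)⁻¹) a * schattenNorm (2 * (recipGap q p)⁻¹) b *
            schattenNorm p Z }
  else
    sSup { c | ∃ (a b : Matrix ι₁ ι₁ ℂ), a ≠ 0 ∧ b ≠ 0 ∧
      c = (schattenNorm (2 * (recipGap q p)⁻¹) a)⁻¹ * (schattenNorm (2 * (recipGap q p)⁻¹) b)⁻¹ *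
            schattenNorm p ((a ⊗ₖ (1 : Matrix ι₂ ι₂ ℂ)) * X * (b ⊗ₖ (1 : Matrix ι₂ ι₂ ℂ))) }

/-- Apply a real function to a Hermitian matrix through its spectral decomposition
(junk value `0` on non-Hermitian matrices). -/
def specFun {ι : Type*} [Fintype ι] [DecidableEq ι] (f : ℝ → ℝ) (A : Matrix ι ι ℂ) :
    Matrix ι ι ℂ :=
  if h : A.IsHermitian then
    (h.eigenvectorUnitary : Matrix ι ι ℂ) *
      Matrix.diagonal (fun i => (f (h.eigenvalues i) : ℂ)) *
      star (h.eigenvectorUnitary : Matrix ι ι ℂ)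
  else 0

/-- Moore–Penrose pseudo-inverse of a Hermitian (in particular positive semidefinite) matrix. -/
def mpinv {ι : Type*} [Fintype ι] [DecidableEq ι] (A : Matrix ι ι ℂ) : Matrix ι ι ℂ :=
  specFun (fun x => if x = 0 then 0 else x⁻¹) A

/-- Orthogonal projection onto the range of a Hermitian (e.g. PSD) matrix. -/
def rangeProj {ι : Type*} [Fintype ι] [DecidableEq ι] (A : Matrix ι ι ℂ) : Matrix ι ι ℂ :=
  specFun (fun x => if x = 0 then 0 else 1) A

/-- Real power of a positive semidefinite matrix, applied via the spectral decomposition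
(`0 ^ t = 0` for `t ≠ 0`). -/
def rpowMat {ι : Type*} [Fintype ι] [DecidableEq ι] (A : Matrix ι ι ℂ) (t : ℝ) : Matrix ι ι ℂ :=
  specFun (fun x => x ^ t) A

/-- Entrywise `ℓ_s` norm of a finite complex vector, `s ∈ (0,∞]`. -/
def lNorm {ι : Type*} [Fintype ι] (s : ℝ≥0∞) (v : ι → ℂ) : ℝ :=
  if s = ∞ then ⨆ i, ‖v i‖
  else (∑ i, ‖v i‖ ^ s.toReal) ^ (1 / s.toReal)

/-- The tensor product `Φ ⊗ Ψ` of two (linear) maps between matrix spaces, given entrywise by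
its action on matrix units. -/
def mapTensorFun {m k m' k' : Type*} [Fintype m] [DecidableEq m] [Fintype k] [DecidableEq k]
    (Φ : Matrix m m ℂ → Matrix m' m' ℂ) (Ψ : Matrix k k ℂ → Matrix k' k' ℂ) :
    Matrix (m × k) (m × k) ℂ → Matrix (m' × k') (m' × k') ℂ :=
  fun X => Matrix.of fun pp qq => ∑ i, ∑ i', ∑ j, ∑ j',
    X (i, j) (i', j') * Φ (Matrix.single i i' 1) pp.1 qq.1 *
      Ψ (Matrix.single j j' 1) pp.2 qq.2

/-- Complete positivity of a linear map between matrix algebras. -/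
def IsCompletelyPositive {m m' : Type*} [Fintype m] [DecidableEq m] [Fintype m'] [DecidableEq m']
    (Φ : Matrix m m ℂ →ₗ[ℂ] Matrix m' m' ℂ) : Prop :=
  ∀ (n : ℕ) (X : Matrix (Fin n × m) (Fin n × m) ℂ), X.PosSemidef →
    (mapTensorFun (id : Matrix (Fin n) (Fin n) ℂ → Matrix (Fin n) (Fin n) ℂ) (⇑Φ) X).PosSemidef

/-- Partial trace over the second tensor factor. -/
def ptrace2 {ι₁ ι₂ : Type*} [Fintype ι₂] (X : Matrix (ι₁ × ι₂) (ι₁ × ι₂) ℂ) : Matrix ι₁ ι₁ ℂ :=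
  Matrix.of fun i i' => ∑ j, X (i, j) (i', j)

end

section lqlpAux
open Finset Real

lemma holder3 {n : ℕ} (a b W : Fin n → ℝ) (ha : ∀ i, 0 ≤ a i) (hb : ∀ i, 0 ≤ b i)
    (hW : ∀ i, 0 ≤ W i) {q' p' r' : ℝ} (hq' : 0 < q') (hp' : 0 < p') (hr' : 0 < r')
    (hqp : q' < p') (hsum : 1/q' = 1/r' + 1/p') :
    (∑ i, (a i * b i * W i) ^ q') ^ (1/q') ≤
      (∑ i, a i ^ (2*r')) ^ (1/(2*r')) * ((∑ i, b i ^ (2*r')) ^ (1/(2*r'))) *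
        (∑ i, W i ^ p') ^ (1/p') := by
  have hq'0 : q' ≠ 0 := hq'.ne'
  have hr'0 : r' ≠ 0 := hr'.ne'
  have hp'0 : p' ≠ 0 := hp'.ne'
  have hq'r : q' < r' := by
    have h1 : 1/r' < 1/q' := by
      rw [hsum]
      have := one_div_pos.mpr hp'
      linarith
    exact lt_of_one_div_lt_one_div hr' h1
  have conj : Real.HolderConjugate (r'/q') (p'/q') := by
    refine ⟨?_, by positivity, by positivity⟩
    · rw [inv_div, inv_div, inv_one]
      field_simp at hsum ⊢
      linarith
  have conj2 : Real.HolderConjugate 2 2 := ⟨by norm_num, by norm_num, by norm_num⟩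
  set X := ∑ i, a i ^ (2*r') with hX
  set Y := ∑ i, b i ^ (2*r') with hY
  set Z := ∑ i, W i ^ p' with hZ
  have hXnn : 0 ≤ X := Finset.sum_nonneg fun i _ => rpow_nonneg (ha i) _
  have hYnn : 0 ≤ Y := Finset.sum_nonneg fun i _ => rpow_nonneg (hb i) _
  have hZnn : 0 ≤ Z := Finset.sum_nonneg fun i _ => rpow_nonneg (hW i) _
  -- step 1: Hölder with exponents r'/q', p'/q'
  have step1 : ∑ i, (a i * b i * W i) ^ q' ≤
      (∑ i, (a i * b i) ^ r') ^ (q'/r') * Z ^ (q'/p') := by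
    have h := Real.inner_le_Lp_mul_Lq_of_nonneg Finset.univ conj
      (f := fun i => (a i * b i) ^ q') (g := fun i => W i ^ q')
      (fun i _ => rpow_nonneg (mul_nonneg (ha i) (hb i)) _)
      (fun i _ => rpow_nonneg (hW i) _)
    have e1 : ∀ i : Fin n, ((a i * b i) ^ q') ^ (r'/q') = (a i * b i) ^ r' := by
      intro i
      rw [← Real.rpow_mul (mul_nonneg (ha i) (hb i))]
      congr 1; field_simp
    have e2 : ∀ i : Fin n, (W i ^ q') ^ (p'/q') = W i ^ p' := by
      intro i
      rw [← Real.rpow_mul (hW i)]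
      congr 1; field_simp
    simp only [e1, e2] at h
    calc ∑ i, (a i * b i * W i) ^ q' = ∑ i, (a i * b i) ^ q' * W i ^ q' := by
          refine Finset.sum_congr rfl fun i _ => ?_
          exact Real.mul_rpow (mul_nonneg (ha i) (hb i)) (hW i)
      _ ≤ _ := h
      _ = (∑ i, (a i * b i) ^ r') ^ (q'/r') * Z ^ (q'/p') := by
          rw [one_div_div, one_div_div]
  -- step 2: Cauchy–Schwarz
  have step2 : ∑ i, (a i * b i) ^ r' ≤ X ^ (1/(2:ℝ)) * Y ^ (1/(2:ℝ)) := by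
    have h := Real.inner_le_Lp_mul_Lq_of_nonneg Finset.univ conj2
      (f := fun i => a i ^ r') (g := fun i => b i ^ r')
      (fun i _ => rpow_nonneg (ha i) _) (fun i _ => rpow_nonneg (hb i) _)
    have e1 : ∀ i : Fin n, (a i ^ r') ^ (2:ℝ) = a i ^ (2*r') := by
      intro i; rw [← Real.rpow_mul (ha i), mul_comm]
    have e2 : ∀ i : Fin n, (b i ^ r') ^ (2:ℝ) = b i ^ (2*r') := by
      intro i; rw [← Real.rpow_mul (hb i), mul_comm]
    simp only [e1, e2] at h
    calc ∑ i, (a i * b i) ^ r' = ∑ i, a i ^ r' * b i ^ r' := by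
          refine Finset.sum_congr rfl fun i _ => ?_
          exact Real.mul_rpow (ha i) (hb i)
      _ ≤ _ := h
  -- combine
  have hsumnn : 0 ≤ ∑ i, (a i * b i * W i) ^ q' :=
    Finset.sum_nonneg fun i _ => rpow_nonneg (mul_nonneg (mul_nonneg (ha i) (hb i)) (hW i)) _
  have hABWnn : 0 ≤ X ^ (1/(2*r')) * Y ^ (1/(2*r')) * Z ^ (1/p') := by positivity
  have main : ∑ i, (a i * b i * W i) ^ q' ≤
      (X ^ (1/(2*r')) * Y ^ (1/(2*r')) * Z ^ (1/p')) ^ q' := by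
    have h2 : (∑ i, (a i * b i) ^ r') ^ (q'/r') ≤
        (X ^ (1/(2:ℝ)) * Y ^ (1/(2:ℝ))) ^ (q'/r') :=
      rpow_le_rpow (Finset.sum_nonneg fun i _ => rpow_nonneg (mul_nonneg (ha i) (hb i)) _)
        step2 (by positivity)
    have h3 : ∑ i, (a i * b i * W i) ^ q' ≤
        (X ^ (1/(2:ℝ)) * Y ^ (1/(2:ℝ))) ^ (q'/r') * Z ^ (q'/p') := by
      refine step1.trans (mul_le_mul_of_nonneg_right h2 (rpow_nonneg hZnn _))
    refine h3.trans (le_of_eq ?_)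
    rw [Real.mul_rpow (by positivity) (by positivity),
        Real.mul_rpow (by positivity) (by positivity),
        Real.mul_rpow (by positivity) (by positivity),
        ← Real.rpow_mul hXnn, ← Real.rpow_mul hYnn, ← Real.rpow_mul hZnn,
        ← Real.rpow_mul hXnn, ← Real.rpow_mul hYnn]
    rw [show 1/2 * (q'/r') = 1/(2*r') * q' by field_simp,
        show q'/p' = 1/p' * q' by field_simp]
  calc (∑ i, (a i * b i * W i) ^ q') ^ (1/q') ≤
        ((X ^ (1/(2*r')) * Y ^ (1/(2*r')) * Z ^ (1/p')) ^ q') ^ (1/q') :=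
        rpow_le_rpow hsumnn main (by positivity)
    _ = _ := by
        rw [← Real.rpow_mul hABWnn, mul_one_div, div_self hq'0, Real.rpow_one]

private lemma lqlp_sum_pos {n : ℕ} {f : Fin n → ℝ} (hf : ∀ i, 0 ≤ f i) {i : Fin n}
    (hi : 0 < f i) : 0 < ∑ k, f k :=
  lt_of_lt_of_le hi (Finset.single_le_sum (fun k _ => hf k) (Finset.mem_univ i))

end lqlpAux

/-- Variational formulas for the 2-indexed `ℓ_q[ℓ_p]` quasi-norms. -/
theorem lqlp_variational (D₁ D₂ : ℕ) (q p : ℝ≥0∞) (hq0 : 0 < q) (hq : q ≠ ∞)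
    (hp0 : 0 < p) (hp : p ≠ ∞) (v : Matrix (Fin D₁) (Fin D₂) ℂ) :
    (q ≤ p →
      (∑ i, (∑ j, ‖v i j‖ ^ p.toReal) ^ (q.toReal / p.toReal)) ^ (1 / q.toReal) =
        sInf { c | ∃ a b : Fin D₁ → ℝ, (∀ i, 0 ≤ a i) ∧ (∀ i, 0 ≤ b i) ∧
          (∀ i, (∃ j, v i j ≠ 0) → 0 < a i ∧ 0 < b i) ∧
          c = lNorm (2 * (recipGap q p)⁻¹) (fun i => (a i : ℂ)) *
              lNorm (2 * (recipGap q p)⁻¹) (fun i => (b i : ℂ)) *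
              lNorm p (fun ij : Fin D₁ × Fin D₂ =>
                if v ij.1 ij.2 ≠ 0 then v ij.1 ij.2 / ((a ij.1 : ℂ) * (b ij.1 : ℂ)) else 0) }) ∧
    (p ≤ q →
      (∑ i, (∑ j, ‖v i j‖ ^ p.toReal) ^ (q.toReal / p.toReal)) ^ (1 / q.toReal) =
        sSup { c | ∃ a b : Fin D₁ → ℂ, a ≠ 0 ∧ b ≠ 0 ∧
          c = (lNorm (2 * (recipGap q p)⁻¹) a)⁻¹ * (lNorm (2 * (recipGap q p)⁻¹) b)⁻¹ *
              lNorm p (fun ij : Fin D₁ × Fin D₂ => a ij.1 * v ij.1 ij.2 * b ij.1) }) := by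

  classical
  have hq' : 0 < q.toReal := ENNReal.toReal_pos hq0.ne' hq
  have hp' : 0 < p.toReal := ENNReal.toReal_pos hp0.ne' hp
  have hq'0 : q.toReal ≠ 0 := hq'.ne'
  have hp'0 : p.toReal ≠ 0 := hp'.ne'
  have habs_nn : ∀ z : ℂ, 0 ≤ ‖z‖ := fun z => norm_nonneg z
  have hrow_nn : ∀ i, 0 ≤ ∑ j, ‖v i j‖ ^ p.toReal := fun i =>
    Finset.sum_nonneg fun j _ => Real.rpow_nonneg (habs_nn _) _
  set R : Fin D₁ → ℝ := fun i => (∑ j, ‖v i j‖ ^ p.toReal) ^ (1 / p.toReal)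
    with hRdef
  have hRnn : ∀ i, 0 ≤ R i := fun i => Real.rpow_nonneg (hrow_nn i) _
  have hRp : ∀ i, R i ^ p.toReal = ∑ j, ‖v i j‖ ^ p.toReal := fun i => by
    simp only [hRdef]
    rw [one_div, Real.rpow_inv_rpow (hrow_nn i) hp'0]
  have hR0 : ∀ i, (∀ j, v i j = 0) → R i = 0 := fun i h => by
    simp only [hRdef]
    rw [Finset.sum_eq_zero fun j _ => by rw [h j, norm_zero, Real.zero_rpow hp'0],
      Real.zero_rpow (one_div_ne_zero hp'0)]
  have hRpos : ∀ i, (∃ j, v i j ≠ 0) → 0 < R i := by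
    rintro i ⟨j, hj⟩
    simp only [hRdef]
    exact Real.rpow_pos_of_pos (lqlp_sum_pos (fun k => Real.rpow_nonneg (habs_nn _) _)
      (Real.rpow_pos_of_pos (norm_pos_iff.mpr hj) _)) _
  set T : ℝ := ∑ i, R i ^ q.toReal with hTdef
  have hTnn : 0 ≤ T := Finset.sum_nonneg fun i _ => Real.rpow_nonneg (hRnn i) _
  have hNT : (∑ i, (∑ j, ‖v i j‖ ^ p.toReal) ^ (q.toReal / p.toReal)) = T := by
    rw [hTdef]
    refine Finset.sum_congr rfl fun i _ => ?_
    simp only [hRdef]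
    rw [← Real.rpow_mul (hrow_nn i)]
    congr 1
    field_simp
  have hlNp : ∀ y : Fin D₁ × Fin D₂ → ℂ, lNorm p y =
      (∑ i, ∑ j, ‖y (i, j)‖ ^ p.toReal) ^ (1 / p.toReal) := fun y => by
    simp only [lNorm]
    rw [if_neg hp, Fintype.sum_prod_type]
  constructor
  · -- first part : q ≤ p
    intro hqp
    rw [hNT]
    rcases lt_or_eq_of_le hqp with hlt | heq
    · -- q < p
      have hq'p' : q.toReal < p.toReal := (ENNReal.toReal_lt_toReal hq hp).mpr hlt
      have h1pq : (1 / p : ℝ≥0∞) ≤ 1 / q := by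
        rw [one_div, one_div]; exact ENNReal.inv_le_inv.mpr hqp
      have h1qtop : (1 / q : ℝ≥0∞) ≠ ∞ := by
        rw [one_div]; exact ENNReal.inv_ne_top.mpr hq0.ne'
      have hgap : recipGap q p = 1 / q - 1 / p := by
        rw [recipGap, tsub_eq_zero_of_le h1pq, max_eq_left zero_le]
      have hgap0 : recipGap q p ≠ 0 := by
        rw [hgap, ne_eq, tsub_eq_zero_iff_le, one_div, one_div, not_le]
        exact ENNReal.inv_lt_inv.mpr hlt
      have hstop : 2 * (recipGap q p)⁻¹ ≠ ∞ :=
        ENNReal.mul_ne_top (by norm_num) (ENNReal.inv_ne_top.mpr hgap0)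
      set r' : ℝ := (1 / q.toReal - 1 / p.toReal)⁻¹ with hr'def
      have hdiffpos : (0:ℝ) < 1 / q.toReal - 1 / p.toReal := by
        have := one_div_lt_one_div_of_lt hq' hq'p'
        linarith
      have hr'pos : 0 < r' := inv_pos.mpr hdiffpos
      have hr'ne : r' ≠ 0 := hr'pos.ne'
      have h2r' : (0:ℝ) < 2 * r' := by positivity
      have hsum : 1 / q.toReal = 1 / r' + 1 / p.toReal := by
        rw [hr'def, one_div ((1 / q.toReal - 1 / p.toReal)⁻¹), inv_inv]; ring
      have hsreal : (2 * (recipGap q p)⁻¹).toReal = 2 * r' := by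
        rw [ENNReal.toReal_mul, ENNReal.toReal_inv, hgap,
          ENNReal.toReal_sub_of_le h1pq h1qtop]
        simp [one_div, hr'def]
      have hlNs : ∀ x : Fin D₁ → ℂ, lNorm (2 * (recipGap q p)⁻¹) x =
          (∑ i, ‖x i‖ ^ (2 * r')) ^ (1 / (2 * r')) := fun x => by
        simp only [lNorm]
        rw [if_neg hstop, hsreal]
      -- lower bound
      have hlb : ∀ a b : Fin D₁ → ℝ, (∀ i, 0 ≤ a i) → (∀ i, 0 ≤ b i) →
          (∀ i, (∃ j, v i j ≠ 0) → 0 < a i ∧ 0 < b i) →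
          T ^ (1 / q.toReal) ≤
            lNorm (2 * (recipGap q p)⁻¹) (fun i => ((a i : ℝ) : ℂ)) *
            lNorm (2 * (recipGap q p)⁻¹) (fun i => ((b i : ℝ) : ℂ)) *
            lNorm p (fun ij : Fin D₁ × Fin D₂ =>
              if v ij.1 ij.2 ≠ 0 then v ij.1 ij.2 / ((a ij.1 : ℂ) * (b ij.1 : ℂ)) else 0) := by
        intro a b ha hb hab
        set W : Fin D₁ → ℝ := fun i =>
          (∑ j, ‖if v i j ≠ 0 then v i j / ((a i : ℂ) * (b i : ℂ)) else 0‖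
            ^ p.toReal) ^ (1 / p.toReal) with hWdef
        have hWrow_nn : ∀ i, 0 ≤ ∑ j, 
            ‖if v i j ≠ 0 then v i j / ((a i : ℂ) * (b i : ℂ)) else 0‖ ^ p.toReal := fun i =>
          Finset.sum_nonneg fun j _ => Real.rpow_nonneg (habs_nn _) _
        have hWnn : ∀ i, 0 ≤ W i := fun i => Real.rpow_nonneg (hWrow_nn i) _
        have hWp : ∀ i, W i ^ p.toReal = ∑ j, 
            ‖if v i j ≠ 0 then v i j / ((a i : ℂ) * (b i : ℂ)) else 0‖ ^ p.toReal := fun i => by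
          simp only [hWdef]
          rw [one_div, Real.rpow_inv_rpow (hWrow_nn i) hp'0]
        have hrowfact : ∀ i, R i ^ q.toReal = (a i * b i * W i) ^ q.toReal := by
          intro i
          by_cases hrow : ∃ j, v i j ≠ 0
          · obtain ⟨hai, hbi⟩ := hab i hrow
            have habpos : 0 < a i * b i := mul_pos hai hbi
            have hwabs : ∀ j, 
                ‖if v i j ≠ 0 then v i j / ((a i : ℂ) * (b i : ℂ)) else 0‖
                = ‖v i j‖ / (a i * b i) := by
              intro j
              by_cases hv : v i j = 0
              · rw [if_neg (not_not.mpr hv), hv]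
                simp
              · rw [if_pos hv, norm_div, norm_mul, Complex.norm_real, Real.norm_eq_abs, Complex.norm_real, Real.norm_eq_abs,
                  abs_of_nonneg (ha i), abs_of_nonneg (hb i)]
            have hWi : W i = R i / (a i * b i) := by
              simp only [hWdef]
              rw [Finset.sum_congr rfl fun j _ => by
                rw [hwabs j, Real.div_rpow (habs_nn _) habpos.le]]
              rw [← Finset.sum_div, ← hRp i, ← Real.div_rpow (hRnn i) habpos.le,
                one_div, Real.rpow_rpow_inv (div_nonneg (hRnn i) habpos.le) hp'0]
            rw [hWi, mul_div_cancel₀ _ habpos.ne']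
          · push_neg at hrow
            have hWz : W i = 0 := by
              simp only [hWdef]
              rw [Finset.sum_eq_zero fun j _ => by
                  rw [if_neg (not_not.mpr (hrow j)), norm_zero, Real.zero_rpow hp'0],
                Real.zero_rpow (one_div_ne_zero hp'0)]
            rw [hWz, hR0 i hrow, mul_zero]
        have e1 : lNorm (2 * (recipGap q p)⁻¹) (fun i => ((a i : ℝ) : ℂ)) =
            (∑ i, a i ^ (2 * r')) ^ (1 / (2 * r')) := by
          rw [hlNs]
          congr 1
          exact Finset.sum_congr rfl fun i _ => by
            rw [Complex.norm_real, Real.norm_eq_abs, abs_of_nonneg (ha i)]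
        have e2 : lNorm (2 * (recipGap q p)⁻¹) (fun i => ((b i : ℝ) : ℂ)) =
            (∑ i, b i ^ (2 * r')) ^ (1 / (2 * r')) := by
          rw [hlNs]
          congr 1
          exact Finset.sum_congr rfl fun i _ => by
            rw [Complex.norm_real, Real.norm_eq_abs, abs_of_nonneg (hb i)]
        have e3 : lNorm p (fun ij : Fin D₁ × Fin D₂ =>
            if v ij.1 ij.2 ≠ 0 then v ij.1 ij.2 / ((a ij.1 : ℂ) * (b ij.1 : ℂ)) else 0) =
            (∑ i, W i ^ p.toReal) ^ (1 / p.toReal) := by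
          rw [hlNp]
          congr 1
          exact Finset.sum_congr rfl fun i _ => (hWp i).symm
        rw [e1, e2, e3, hTdef, Finset.sum_congr rfl fun i _ => hrowfact i]
        exact holder3 a b W ha hb hWnn hq' hp' hr'pos hq'p' hsum
      -- membership
      have hmem : ∃ a b : Fin D₁ → ℝ, (∀ i, 0 ≤ a i) ∧ (∀ i, 0 ≤ b i) ∧
          (∀ i, (∃ j, v i j ≠ 0) → 0 < a i ∧ 0 < b i) ∧
          T ^ (1 / q.toReal) =
            lNorm (2 * (recipGap q p)⁻¹) (fun i => ((a i : ℝ) : ℂ)) *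
            lNorm (2 * (recipGap q p)⁻¹) (fun i => ((b i : ℝ) : ℂ)) *
            lNorm p (fun ij : Fin D₁ × Fin D₂ =>
              if v ij.1 ij.2 ≠ 0 then v ij.1 ij.2 / ((a ij.1 : ℂ) * (b ij.1 : ℂ)) else 0) := by
        set A : Fin D₁ → ℝ := fun i => R i ^ (q.toReal / (2 * r')) with hAdef
        have hAnn : ∀ i, 0 ≤ A i := fun i => Real.rpow_nonneg (hRnn i) _
        have hApos : ∀ i, (∃ j, v i j ≠ 0) → 0 < A i ∧ 0 < A i := fun i h =>
          ⟨Real.rpow_pos_of_pos (hRpos i h) _, Real.rpow_pos_of_pos (hRpos i h) _⟩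
        have hANorm : lNorm (2 * (recipGap q p)⁻¹) (fun i => ((A i : ℝ) : ℂ)) =
            T ^ (1 / (2 * r')) := by
          rw [hlNs]
          congr 1
          rw [hTdef]
          refine Finset.sum_congr rfl fun i _ => ?_
          rw [Complex.norm_real, Real.norm_eq_abs, abs_of_nonneg (hAnn i)]
          simp only [hAdef]
          rw [← Real.rpow_mul (hRnn i), div_mul_cancel₀ _ h2r'.ne']
        have hUrow : ∀ i, ∑ j, 
            ‖if v i j ≠ 0 then v i j / ((A i : ℂ) * (A i : ℂ)) else 0‖ ^ p.toReal
            = R i ^ q.toReal := by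
          intro i
          by_cases hrow : ∃ j, v i j ≠ 0
          · have hRi := hRpos i hrow
            have hAA : ‖(A i : ℂ) * (A i : ℂ)‖ = R i ^ (q.toReal / r') := by
              simp only [norm_mul, Complex.norm_real, Real.norm_eq_abs]
              rw [abs_of_nonneg (hAnn i)]
              simp only [hAdef]
              rw [← Real.rpow_add hRi]
              congr 1
              field_simp
              ring
            have hstep : ∀ j, 
                ‖if v i j ≠ 0 then v i j / ((A i : ℂ) * (A i : ℂ)) else 0‖ ^ p.toReal
                = ‖v i j‖ ^ p.toReal / (R i ^ (q.toReal / r')) ^ p.toReal := by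
              intro j
              by_cases hv : v i j = 0
              · rw [if_neg (not_not.mpr hv), hv]
                simp [Real.zero_rpow hp'0]
              · rw [if_pos hv, norm_div, hAA,
                  Real.div_rpow (habs_nn _) (Real.rpow_nonneg (hRnn i) _)]
            rw [Finset.sum_congr rfl fun j _ => hstep j, ← Finset.sum_div, ← hRp i,
              ← Real.rpow_mul (hRnn i), ← Real.rpow_sub hRi]
            congr 1
            have hrr : 1 / r' = 1 / q.toReal - 1 / p.toReal := by linarith [hsum]
            have hqr : q.toReal / r' = 1 - q.toReal / p.toReal := by
              rw [div_eq_mul_one_div q.toReal r', hrr]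
              field_simp
            rw [hqr]
            field_simp
            ring
          · push_neg at hrow
            rw [hR0 i hrow, Real.zero_rpow hq'0]
            exact Finset.sum_eq_zero fun j _ => by
              rw [if_neg (not_not.mpr (hrow j)), norm_zero, Real.zero_rpow hp'0]
        have hUNorm : lNorm p (fun ij : Fin D₁ × Fin D₂ =>
            if v ij.1 ij.2 ≠ 0 then v ij.1 ij.2 / ((A ij.1 : ℂ) * (A ij.1 : ℂ)) else 0)
            = T ^ (1 / p.toReal) := by
          rw [hlNp]
          congr 1
          rw [hTdef]
          exact Finset.sum_congr rfl fun i _ => hUrow i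
        refine ⟨A, A, hAnn, hAnn, hApos, ?_⟩
        rw [hANorm, hUNorm, ← Real.rpow_add' hTnn (by positivity),
          ← Real.rpow_add' hTnn (by positivity)]
        congr 1
        rw [hsum]
        field_simp
        ring
      obtain ⟨A, B, hA1, hB1, hAB, hABeq⟩ := hmem
      refine le_antisymm (le_csInf ⟨_, A, B, hA1, hB1, hAB, hABeq⟩ ?_) (csInf_le ?_ ?_)
      · rintro c ⟨a, b, ha, hb, hab, rfl⟩
        exact hlb a b ha hb hab
      · refine ⟨0, ?_⟩
        rintro c ⟨a, b, ha, hb, hab, rfl⟩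
        rw [hlNs, hlNs, hlNp]
        exact mul_nonneg (mul_nonneg (Real.rpow_nonneg (Finset.sum_nonneg fun i _ =>
            Real.rpow_nonneg (habs_nn _) _) _) (Real.rpow_nonneg (Finset.sum_nonneg fun i _ =>
            Real.rpow_nonneg (habs_nn _) _) _)) (Real.rpow_nonneg (Finset.sum_nonneg fun i _ =>
            Finset.sum_nonneg fun j _ => Real.rpow_nonneg (habs_nn _) _) _)
      · exact ⟨A, B, hA1, hB1, hAB, hABeq⟩
    · -- q = p
      subst heq
      have hs : 2 * (recipGap q q)⁻¹ = ⊤ := by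
        simp [recipGap, tsub_self]
      have hlNs : ∀ x : Fin D₁ → ℂ, lNorm (2 * (recipGap q q)⁻¹) x =
          ⨆ i, ‖x i‖ := fun x => by
        simp only [lNorm]
        rw [if_pos hs]
      have hTsum : T = ∑ i, ∑ j, ‖v i j‖ ^ q.toReal := by
        rw [hTdef]
        exact Finset.sum_congr rfl fun i _ => hRp i
      -- lower bound
      have hlb : ∀ a b : Fin D₁ → ℝ, (∀ i, 0 ≤ a i) → (∀ i, 0 ≤ b i) →
          (∀ i, (∃ j, v i j ≠ 0) → 0 < a i ∧ 0 < b i) →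
          T ^ (1 / q.toReal) ≤
            lNorm (2 * (recipGap q q)⁻¹) (fun i => ((a i : ℝ) : ℂ)) *
            lNorm (2 * (recipGap q q)⁻¹) (fun i => ((b i : ℝ) : ℂ)) *
            lNorm q (fun ij : Fin D₁ × Fin D₂ =>
              if v ij.1 ij.2 ≠ 0 then v ij.1 ij.2 / ((a ij.1 : ℂ) * (b ij.1 : ℂ)) else 0) := by
        intro a b ha hb hab
        rw [hlNs, hlNs, hlNp]
        set SA : ℝ := ⨆ i, ‖(a i : ℂ)‖ with hSAdef
        set SB : ℝ := ⨆ i, ‖(b i : ℂ)‖ with hSBdef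
        have hSAnn : 0 ≤ SA := Real.iSup_nonneg fun i => habs_nn _
        have hSBnn : 0 ≤ SB := Real.iSup_nonneg fun i => habs_nn _
        have hSAub : ∀ i, a i ≤ SA := fun i => by
          calc a i = ‖(a i : ℂ)‖ := by
                rw [Complex.norm_real, Real.norm_eq_abs, abs_of_nonneg (ha i)]
            _ ≤ SA := le_ciSup (f := fun i => ‖(a i : ℂ)‖) (Set.finite_range _).bddAbove i
        have hSBub : ∀ i, b i ≤ SB := fun i => by
          calc b i = ‖(b i : ℂ)‖ := by
                rw [Complex.norm_real, Real.norm_eq_abs, abs_of_nonneg (hb i)]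
            _ ≤ SB := le_ciSup (f := fun i => ‖(b i : ℂ)‖) (Set.finite_range _).bddAbove i
        have hentry : ∀ i j, ‖v i j‖ ^ q.toReal ≤ (SA * SB) ^ q.toReal *
            ‖if v i j ≠ 0 then v i j / ((a i : ℂ) * (b i : ℂ)) else 0‖
              ^ q.toReal := by
          intro i j
          by_cases hv : v i j = 0
          · rw [hv, norm_zero, Real.zero_rpow hq'0]
            exact mul_nonneg (Real.rpow_nonneg (mul_nonneg hSAnn hSBnn) _)
              (Real.rpow_nonneg (habs_nn _) _)
          · obtain ⟨hai, hbi⟩ := hab i ⟨j, hv⟩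
            have habpos : 0 < a i * b i := mul_pos hai hbi
            rw [if_pos hv, norm_div, norm_mul, Complex.norm_real, Real.norm_eq_abs, Complex.norm_real, Real.norm_eq_abs,
              abs_of_nonneg (ha i), abs_of_nonneg (hb i),
              Real.div_rpow (habs_nn _) habpos.le]
            have hle : (a i * b i) ^ q.toReal ≤ (SA * SB) ^ q.toReal :=
              Real.rpow_le_rpow habpos.le
                (mul_le_mul (hSAub i) (hSBub i) (hb i) hSAnn) hq'.le
            have hpos : 0 < (a i * b i) ^ q.toReal := Real.rpow_pos_of_pos habpos _
            have hre : ‖v i j‖ ^ q.toReal = (a i * b i) ^ q.toReal *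
                (‖v i j‖ ^ q.toReal / (a i * b i) ^ q.toReal) := by
              field_simp
            exact hre.trans_le (mul_le_mul_of_nonneg_right hle
              (div_nonneg (Real.rpow_nonneg (habs_nn _) _) hpos.le))
        have hsumle : T ≤ (SA * SB) ^ q.toReal * ∑ i, ∑ j, 
            ‖if v i j ≠ 0 then v i j / ((a i : ℂ) * (b i : ℂ)) else 0‖ ^ q.toReal := by
          rw [hTsum, Finset.mul_sum]
          refine Finset.sum_le_sum fun i _ => ?_
          rw [Finset.mul_sum]
          exact Finset.sum_le_sum fun j _ => hentry i j
        calc T ^ (1 / q.toReal) ≤ ((SA * SB) ^ q.toReal * ∑ i, ∑ j, 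
              ‖if v i j ≠ 0 then v i j / ((a i : ℂ) * (b i : ℂ)) else 0‖ ^ q.toReal)
                ^ (1 / q.toReal) :=
              Real.rpow_le_rpow hTnn hsumle (by positivity)
          _ = SA * SB * (∑ i, ∑ j, 
              ‖if v i j ≠ 0 then v i j / ((a i : ℂ) * (b i : ℂ)) else 0‖ ^ q.toReal)
                ^ (1 / q.toReal) := by
              rw [Real.mul_rpow (Real.rpow_nonneg (mul_nonneg hSAnn hSBnn) _)
                (Finset.sum_nonneg fun i _ => Finset.sum_nonneg fun j _ =>
                  Real.rpow_nonneg (habs_nn _) _), one_div,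
                Real.rpow_rpow_inv (mul_nonneg hSAnn hSBnn) hq'0]
      -- membership
      have hmem : ∃ a b : Fin D₁ → ℝ, (∀ i, 0 ≤ a i) ∧ (∀ i, 0 ≤ b i) ∧
          (∀ i, (∃ j, v i j ≠ 0) → 0 < a i ∧ 0 < b i) ∧
          T ^ (1 / q.toReal) =
            lNorm (2 * (recipGap q q)⁻¹) (fun i => ((a i : ℝ) : ℂ)) *
            lNorm (2 * (recipGap q q)⁻¹) (fun i => ((b i : ℝ) : ℂ)) *
            lNorm q (fun ij : Fin D₁ × Fin D₂ =>
              if v ij.1 ij.2 ≠ 0 then v ij.1 ij.2 / ((a ij.1 : ℂ) * (b ij.1 : ℂ)) else 0) := by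
        rcases isEmpty_or_nonempty (Fin D₁) with hE | hNE
        · refine ⟨0, 0, fun i => le_rfl, fun i => le_rfl, fun i => isEmptyElim i, ?_⟩
          rw [hlNs, Real.iSup_of_isEmpty, zero_mul, zero_mul]
          have hT0 : T = 0 := by
            rw [hTdef, Finset.univ_eq_empty, Finset.sum_empty]
          rw [hT0, Real.zero_rpow (one_div_ne_zero hq'0)]
        · refine ⟨fun _ => 1, fun _ => 1, fun i => zero_le_one, fun i => zero_le_one,
            fun i _ => ⟨zero_lt_one, zero_lt_one⟩, ?_⟩
          have hone : lNorm (2 * (recipGap q q)⁻¹) (fun _ : Fin D₁ => ((1 : ℝ) : ℂ)) = 1 := by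
            rw [hlNs]
            simp
          have habsw : ∀ i j, 
              ‖if v i j ≠ 0 then v i j / (((1:ℝ) : ℂ) * ((1:ℝ) : ℂ)) else 0‖
              = ‖v i j‖ := by
            intro i j
            by_cases hv : v i j = 0
            · rw [if_neg (not_not.mpr hv), hv, norm_zero]
            · rw [if_pos hv]
              simp
          have hw : lNorm q (fun ij : Fin D₁ × Fin D₂ =>
              if v ij.1 ij.2 ≠ 0 then v ij.1 ij.2 / (((1:ℝ) : ℂ) * ((1:ℝ) : ℂ)) else 0)
              = T ^ (1 / q.toReal) := by
            rw [hlNp]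
            congr 1
            rw [hTsum]
            exact Finset.sum_congr rfl fun i _ => Finset.sum_congr rfl fun j _ => by
              rw [habsw i j]
          rw [hone, hw, one_mul, one_mul]
      obtain ⟨A, B, hA1, hB1, hAB, hABeq⟩ := hmem
      refine le_antisymm (le_csInf ⟨_, A, B, hA1, hB1, hAB, hABeq⟩ ?_) (csInf_le ?_ ?_)
      · rintro c ⟨a, b, ha, hb, hab, rfl⟩
        exact hlb a b ha hb hab
      · refine ⟨0, ?_⟩
        rintro c ⟨a, b, ha, hb, hab, rfl⟩
        rw [hlNs, hlNs, hlNp]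
        exact mul_nonneg (mul_nonneg (Real.iSup_nonneg fun i => habs_nn _)
          (Real.iSup_nonneg fun i => habs_nn _)) (Real.rpow_nonneg (Finset.sum_nonneg
            fun i _ => Finset.sum_nonneg fun j _ => Real.rpow_nonneg (habs_nn _) _) _)
      · exact ⟨A, B, hA1, hB1, hAB, hABeq⟩
  · -- second part : p ≤ q
    intro hpq
    rw [hNT]
    rcases lt_or_eq_of_le hpq with hlt | heq
    · -- p < q
      have hp'q' : p.toReal < q.toReal := (ENNReal.toReal_lt_toReal hp hq).mpr hlt
      have h1qp : (1 / q : ℝ≥0∞) ≤ 1 / p := by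
        rw [one_div, one_div]; exact ENNReal.inv_le_inv.mpr hpq
      have h1ptop : (1 / p : ℝ≥0∞) ≠ ∞ := by
        rw [one_div]; exact ENNReal.inv_ne_top.mpr hp0.ne'
      have hgap : recipGap q p = 1 / p - 1 / q := by
        rw [recipGap, tsub_eq_zero_of_le h1qp, max_eq_right zero_le]
      have hgap0 : recipGap q p ≠ 0 := by
        rw [hgap, ne_eq, tsub_eq_zero_iff_le, one_div, one_div, not_le]
        exact ENNReal.inv_lt_inv.mpr hlt
      have hstop : 2 * (recipGap q p)⁻¹ ≠ ∞ :=
        ENNReal.mul_ne_top (by norm_num) (ENNReal.inv_ne_top.mpr hgap0)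
      set r' : ℝ := (1 / p.toReal - 1 / q.toReal)⁻¹ with hr'def
      have hdiffpos : (0:ℝ) < 1 / p.toReal - 1 / q.toReal := by
        have := one_div_lt_one_div_of_lt hp' hp'q'
        linarith
      have hr'pos : 0 < r' := inv_pos.mpr hdiffpos
      have hr'ne : r' ≠ 0 := hr'pos.ne'
      have h2r' : (0:ℝ) < 2 * r' := by positivity
      have hsum : 1 / p.toReal = 1 / r' + 1 / q.toReal := by
        rw [hr'def, one_div ((1 / p.toReal - 1 / q.toReal)⁻¹), inv_inv]; ring
      have hsreal : (2 * (recipGap q p)⁻¹).toReal = 2 * r' := by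
        rw [ENNReal.toReal_mul, ENNReal.toReal_inv, hgap,
          ENNReal.toReal_sub_of_le h1qp h1ptop]
        simp [one_div, hr'def]
      have hlNs : ∀ x : Fin D₁ → ℂ, lNorm (2 * (recipGap q p)⁻¹) x =
          (∑ i, ‖x i‖ ^ (2 * r')) ^ (1 / (2 * r')) := fun x => by
        simp only [lNorm]
        rw [if_neg hstop, hsreal]
      -- upper bound
      have hub : ∀ a b : Fin D₁ → ℂ, a ≠ 0 → b ≠ 0 →
          (lNorm (2 * (recipGap q p)⁻¹) a)⁻¹ * (lNorm (2 * (recipGap q p)⁻¹) b)⁻¹ *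
            lNorm p (fun ij : Fin D₁ × Fin D₂ => a ij.1 * v ij.1 ij.2 * b ij.1) ≤
            T ^ (1 / q.toReal) := by
        intro a b ha0 hb0
        obtain ⟨ia, hia⟩ := Function.ne_iff.mp ha0
        obtain ⟨ib, hib⟩ := Function.ne_iff.mp hb0
        have hApos : 0 < lNorm (2 * (recipGap q p)⁻¹) a := by
          rw [hlNs]
          exact Real.rpow_pos_of_pos (lqlp_sum_pos
            (fun i => Real.rpow_nonneg (habs_nn _) _)
            (Real.rpow_pos_of_pos (norm_pos_iff.mpr hia) _)) _
        have hBpos : 0 < lNorm (2 * (recipGap q p)⁻¹) b := by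
          rw [hlNs]
          exact Real.rpow_pos_of_pos (lqlp_sum_pos
            (fun i => Real.rpow_nonneg (habs_nn _) _)
            (Real.rpow_pos_of_pos (norm_pos_iff.mpr hib) _)) _
        have hrowu : ∀ i, ∑ j, ‖a i * v i j * b i‖ ^ p.toReal =
            (‖a i‖ * ‖b i‖ * R i) ^ p.toReal := by
          intro i
          calc ∑ j, ‖a i * v i j * b i‖ ^ p.toReal
              = ∑ j, (‖a i‖ * ‖b i‖) ^ p.toReal *
                  ‖v i j‖ ^ p.toReal := by
                refine Finset.sum_congr rfl fun j _ => ?_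
                rw [norm_mul, norm_mul, mul_right_comm,
                  Real.mul_rpow (mul_nonneg (habs_nn _) (habs_nn _)) (habs_nn _)]
            _ = (‖a i‖ * ‖b i‖) ^ p.toReal *
                  ∑ j, ‖v i j‖ ^ p.toReal := by rw [← Finset.mul_sum]
            _ = (‖a i‖ * ‖b i‖) ^ p.toReal * R i ^ p.toReal := by
                rw [hRp]
            _ = _ := by
                rw [← Real.mul_rpow (mul_nonneg (habs_nn _) (habs_nn _)) (hRnn i)]
        have hkey : lNorm p (fun ij : Fin D₁ × Fin D₂ => a ij.1 * v ij.1 ij.2 * b ij.1) ≤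
            lNorm (2 * (recipGap q p)⁻¹) a * lNorm (2 * (recipGap q p)⁻¹) b *
              T ^ (1 / q.toReal) := by
          rw [hlNp, hlNs, hlNs, hTdef]
          rw [Finset.sum_congr rfl fun i (_ : i ∈ Finset.univ) => hrowu i]
          exact holder3 (fun i => ‖a i‖) (fun i => ‖b i‖) R
            (fun i => habs_nn _) (fun i => habs_nn _) hRnn hp' hq' hr'pos hp'q' hsum
        calc (lNorm (2 * (recipGap q p)⁻¹) a)⁻¹ * (lNorm (2 * (recipGap q p)⁻¹) b)⁻¹ *
              lNorm p (fun ij : Fin D₁ × Fin D₂ => a ij.1 * v ij.1 ij.2 * b ij.1)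
            ≤ (lNorm (2 * (recipGap q p)⁻¹) a)⁻¹ * (lNorm (2 * (recipGap q p)⁻¹) b)⁻¹ *
              (lNorm (2 * (recipGap q p)⁻¹) a * lNorm (2 * (recipGap q p)⁻¹) b *
                T ^ (1 / q.toReal)) := by
              refine mul_le_mul_of_nonneg_left hkey ?_
              positivity
          _ = T ^ (1 / q.toReal) := by
              rw [show ∀ x y z : ℝ, x⁻¹ * y⁻¹ * (x * y * z) = x⁻¹ * x * (y⁻¹ * y) * z from
                  fun x y z => by ring,
                inv_mul_cancel₀ hApos.ne', inv_mul_cancel₀ hBpos.ne', one_mul, one_mul]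
      -- membership and conclusion
      rcases isEmpty_or_nonempty (Fin D₁) with hE | hNE
      · have hT0 : T = 0 := by
          rw [hTdef, Finset.univ_eq_empty, Finset.sum_empty]
        have hSempty : {c : ℝ | ∃ a b : Fin D₁ → ℂ, a ≠ 0 ∧ b ≠ 0 ∧
            c = (lNorm (2 * (recipGap q p)⁻¹) a)⁻¹ * (lNorm (2 * (recipGap q p)⁻¹) b)⁻¹ *
              lNorm p (fun ij : Fin D₁ × Fin D₂ => a ij.1 * v ij.1 ij.2 * b ij.1)} = ∅ := by
          ext c
          simp only [Set.mem_setOf_eq, Set.mem_empty_iff_false, iff_false]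
          rintro ⟨a, b, ha0, -, -⟩
          exact ha0 (funext fun i => isEmptyElim i)
        rw [hSempty, Real.sSup_empty, hT0, Real.zero_rpow (one_div_ne_zero hq'0)]
      · have hmem : ∃ a b : Fin D₁ → ℂ, a ≠ 0 ∧ b ≠ 0 ∧
            T ^ (1 / q.toReal) =
              (lNorm (2 * (recipGap q p)⁻¹) a)⁻¹ * (lNorm (2 * (recipGap q p)⁻¹) b)⁻¹ *
              lNorm p (fun ij : Fin D₁ × Fin D₂ => a ij.1 * v ij.1 ij.2 * b ij.1) := by
          by_cases hT0 : T = 0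
          · have hRz : ∀ i, R i = 0 := by
              intro i
              by_contra h
              have h1 : 0 < R i ^ q.toReal :=
                Real.rpow_pos_of_pos ((hRnn i).lt_of_ne (Ne.symm h)) _
              have h2 : 0 < T := lqlp_sum_pos (fun k => Real.rpow_nonneg (hRnn k) _) h1
              exact h2.ne' hT0
            have hvz : ∀ i j, v i j = 0 := by
              intro i j
              by_contra h
              exact absurd (hRpos i ⟨j, h⟩) (by rw [hRz i]; exact lt_irrefl 0)
            have hones : (fun _ : Fin D₁ => (1 : ℂ)) ≠ 0 := by
              intro h
              have h2 := congrFun h (Classical.arbitrary _)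
              simp at h2
            refine ⟨fun _ => 1, fun _ => 1, hones, hones, ?_⟩
            have hu : lNorm p (fun ij : Fin D₁ × Fin D₂ => (1 : ℂ) * v ij.1 ij.2 * 1) = 0 := by
              rw [hlNp]
              rw [Finset.sum_eq_zero fun i _ => Finset.sum_eq_zero fun j _ => by
                rw [hvz i j, mul_zero, zero_mul, norm_zero, Real.zero_rpow hp'0]]
              exact Real.zero_rpow (one_div_ne_zero hp'0)
            rw [hu, mul_zero, hT0, Real.zero_rpow (one_div_ne_zero hq'0)]
          · have hTpos : 0 < T := hTnn.lt_of_ne (Ne.symm hT0)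
            have hex : ∃ i, R i ≠ 0 := by
              by_contra h
              push_neg at h
              apply hT0
              rw [hTdef]
              exact Finset.sum_eq_zero fun i _ => by rw [h i, Real.zero_rpow hq'0]
            obtain ⟨i0, hi0⟩ := hex
            have hRi0 : 0 < R i0 := (hRnn i0).lt_of_ne (Ne.symm hi0)
            set A : Fin D₁ → ℝ := fun i => R i ^ (q.toReal / (2 * r')) with hAdef
            have hAnn : ∀ i, 0 ≤ A i := fun i => Real.rpow_nonneg (hRnn i) _
            have hA0 : (fun i => ((A i : ℝ) : ℂ)) ≠ 0 := by
              intro h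
              have h2 := congrFun h i0
              simp only [Pi.zero_apply, Complex.ofReal_eq_zero] at h2
              have h3 : (0:ℝ) < A i0 := by
                simp only [hAdef]
                exact Real.rpow_pos_of_pos hRi0 _
              exact h3.ne' h2
            have hANorm : lNorm (2 * (recipGap q p)⁻¹) (fun i => ((A i : ℝ) : ℂ)) =
                T ^ (1 / (2 * r')) := by
              rw [hlNs]
              congr 1
              rw [hTdef]
              refine Finset.sum_congr rfl fun i _ => ?_
              rw [Complex.norm_real, Real.norm_eq_abs, abs_of_nonneg (hAnn i)]
              simp only [hAdef]
              rw [← Real.rpow_mul (hRnn i), div_mul_cancel₀ _ h2r'.ne']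
            have hθ0 : q.toReal / (2 * r') ≠ 0 := by positivity
            have hUrow : ∀ i, ∑ j, ‖((A i : ℝ) : ℂ) * v i j * ((A i : ℝ) : ℂ)‖
                ^ p.toReal = R i ^ q.toReal := by
              intro i
              by_cases hri : R i = 0
              · have hAi : A i = 0 := by
                  simp only [hAdef]
                  rw [hri, Real.zero_rpow hθ0]
                rw [hri, Real.zero_rpow hq'0]
                exact Finset.sum_eq_zero fun j _ => by
                  rw [hAi]
                  simp [Real.zero_rpow hp'0]
              · have hRi : 0 < R i := (hRnn i).lt_of_ne (Ne.symm hri)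
                have habsu : ∀ j, ‖((A i : ℝ) : ℂ) * v i j * ((A i : ℝ) : ℂ)‖
                    = R i ^ (q.toReal / r') * ‖v i j‖ := by
                  intro j
                  rw [norm_mul, norm_mul, Complex.norm_real, Real.norm_eq_abs,
                    abs_of_nonneg (hAnn i), mul_right_comm]
                  congr 1
                  simp only [hAdef]
                  rw [← Real.rpow_add hRi]
                  congr 1
                  field_simp
                  ring
                calc ∑ j, ‖((A i : ℝ) : ℂ) * v i j * ((A i : ℝ) : ℂ)‖ ^ p.toReal
                    = ∑ j, (R i ^ (q.toReal / r')) ^ p.toReal *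
                        ‖v i j‖ ^ p.toReal := by
                      refine Finset.sum_congr rfl fun j _ => ?_
                      rw [habsu j,
                        Real.mul_rpow (Real.rpow_nonneg (hRnn i) _) (habs_nn _)]
                  _ = (R i ^ (q.toReal / r')) ^ p.toReal *
                        ∑ j, ‖v i j‖ ^ p.toReal := by rw [← Finset.mul_sum]
                  _ = (R i ^ (q.toReal / r')) ^ p.toReal * R i ^ p.toReal := by rw [hRp]
                  _ = R i ^ (q.toReal / r' * p.toReal) * R i ^ p.toReal := by
                      rw [← Real.rpow_mul (hRnn i)]
                  _ = R i ^ (q.toReal / r' * p.toReal + p.toReal) := by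
                      rw [Real.rpow_add hRi]
                  _ = R i ^ q.toReal := by
                      congr 1
                      have hrr : 1 / r' = 1 / p.toReal - 1 / q.toReal := by linarith [hsum]
                      have hqr : q.toReal / r' = q.toReal / p.toReal - 1 := by
                        rw [div_eq_mul_one_div q.toReal r', hrr]
                        field_simp
                      rw [hqr]
                      field_simp
                      ring
            have hUNorm : lNorm p (fun ij : Fin D₁ × Fin D₂ =>
                ((A ij.1 : ℝ) : ℂ) * v ij.1 ij.2 * ((A ij.1 : ℝ) : ℂ)) =
                T ^ (1 / p.toReal) := by
              rw [hlNp]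
              congr 1
              rw [hTdef]
              exact Finset.sum_congr rfl fun i _ => hUrow i
            refine ⟨fun i => ((A i : ℝ) : ℂ), fun i => ((A i : ℝ) : ℂ), hA0, hA0, ?_⟩
            rw [hANorm, hUNorm, ← Real.rpow_neg hTnn, ← Real.rpow_add hTpos,
              ← Real.rpow_add hTpos]
            have h2rr : 1 / (2 * r') + 1 / (2 * r') = 1 / r' := by
              rw [one_div (2 * r'), one_div r', mul_inv]
              ring
            have hexp : 1 / q.toReal =
                -(1 / (2 * r')) + -(1 / (2 * r')) + 1 / p.toReal := by
              linarith [hsum, h2rr]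
            rw [hexp]
        obtain ⟨A, B, hA0, hB0, hABeq⟩ := hmem
        refine le_antisymm (le_csSup ⟨T ^ (1 / q.toReal), ?_⟩ ⟨A, B, hA0, hB0, hABeq⟩)
          (csSup_le ⟨_, A, B, hA0, hB0, hABeq⟩ ?_)
        · rintro c ⟨a, b, ha0, hb0, rfl⟩
          exact hub a b ha0 hb0
        · rintro c ⟨a, b, ha0, hb0, rfl⟩
          exact hub a b ha0 hb0
    · -- p = q
      subst heq
      have hs : 2 * (recipGap p p)⁻¹ = ⊤ := by
        simp [recipGap, tsub_self]
      have hlNs : ∀ x : Fin D₁ → ℂ, lNorm (2 * (recipGap p p)⁻¹) x =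
          ⨆ i, ‖x i‖ := fun x => by
        simp only [lNorm]
        rw [if_pos hs]
      have hTsum : T = ∑ i, ∑ j, ‖v i j‖ ^ p.toReal := by
        rw [hTdef]
        exact Finset.sum_congr rfl fun i _ => hRp i
      have hub : ∀ a b : Fin D₁ → ℂ, a ≠ 0 → b ≠ 0 →
          (lNorm (2 * (recipGap p p)⁻¹) a)⁻¹ * (lNorm (2 * (recipGap p p)⁻¹) b)⁻¹ *
            lNorm p (fun ij : Fin D₁ × Fin D₂ => a ij.1 * v ij.1 ij.2 * b ij.1) ≤
            T ^ (1 / p.toReal) := by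
        intro a b ha0 hb0
        obtain ⟨ia, hia⟩ := Function.ne_iff.mp ha0
        obtain ⟨ib, hib⟩ := Function.ne_iff.mp hb0
        rw [hlNs, hlNs, hlNp]
        set SA : ℝ := ⨆ i, ‖a i‖ with hSAdef
        set SB : ℝ := ⨆ i, ‖b i‖ with hSBdef
        have hSAnn : 0 ≤ SA := Real.iSup_nonneg fun i => habs_nn _
        have hSBnn : 0 ≤ SB := Real.iSup_nonneg fun i => habs_nn _
        have hSAub : ∀ i, ‖a i‖ ≤ SA := fun i =>
          le_ciSup (f := fun i => ‖a i‖) (Set.finite_range _).bddAbove i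
        have hSBub : ∀ i, ‖b i‖ ≤ SB := fun i =>
          le_ciSup (f := fun i => ‖b i‖) (Set.finite_range _).bddAbove i
        have hSApos : 0 < SA := lt_of_lt_of_le (norm_pos_iff.mpr hia) (hSAub ia)
        have hSBpos : 0 < SB := lt_of_lt_of_le (norm_pos_iff.mpr hib) (hSBub ib)
        have hentry : ∀ i j, ‖a i * v i j * b i‖ ^ p.toReal ≤
            (SA * SB) ^ p.toReal * ‖v i j‖ ^ p.toReal := by
          intro i j
          calc ‖a i * v i j * b i‖ ^ p.toReal
              = (‖a i‖ * ‖b i‖ * ‖v i j‖) ^ p.toReal := by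
                rw [norm_mul, norm_mul, mul_right_comm]
            _ ≤ (SA * SB * ‖v i j‖) ^ p.toReal :=
                Real.rpow_le_rpow
                  (mul_nonneg (mul_nonneg (habs_nn _) (habs_nn _)) (habs_nn _))
                  (mul_le_mul_of_nonneg_right
                    (mul_le_mul (hSAub i) (hSBub i) (habs_nn _) hSAnn) (habs_nn _)) hp'.le
            _ = (SA * SB) ^ p.toReal * ‖v i j‖ ^ p.toReal :=
                Real.mul_rpow (mul_nonneg hSAnn hSBnn) (habs_nn _)
        have hsum_le : ∑ i, ∑ j, ‖a i * v i j * b i‖ ^ p.toReal ≤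
            (SA * SB) ^ p.toReal * T := by
          rw [hTsum, Finset.mul_sum]
          refine Finset.sum_le_sum fun i _ => ?_
          rw [Finset.mul_sum]
          exact Finset.sum_le_sum fun j _ => hentry i j
        have hin_nn : 0 ≤ ∑ i, ∑ j, ‖a i * v i j * b i‖ ^ p.toReal :=
          Finset.sum_nonneg fun i _ => Finset.sum_nonneg fun j _ =>
            Real.rpow_nonneg (habs_nn _) _
        calc SA⁻¹ * SB⁻¹ * (∑ i, ∑ j, ‖a i * v i j * b i‖ ^ p.toReal)
              ^ (1 / p.toReal)
            ≤ SA⁻¹ * SB⁻¹ * ((SA * SB) ^ p.toReal * T) ^ (1 / p.toReal) := by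
              refine mul_le_mul_of_nonneg_left
                (Real.rpow_le_rpow hin_nn hsum_le (by positivity)) ?_
              positivity
          _ = T ^ (1 / p.toReal) := by
              rw [Real.mul_rpow (Real.rpow_nonneg (mul_nonneg hSAnn hSBnn) _) hTnn,
                one_div, Real.rpow_rpow_inv (mul_nonneg hSAnn hSBnn) hp'0,
                show SA⁻¹ * SB⁻¹ * (SA * SB * T ^ p.toReal⁻¹) =
                  SA⁻¹ * SA * (SB⁻¹ * SB) * T ^ p.toReal⁻¹ from by ring,
                inv_mul_cancel₀ hSApos.ne', inv_mul_cancel₀ hSBpos.ne', one_mul, one_mul]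
      rcases isEmpty_or_nonempty (Fin D₁) with hE | hNE
      · have hT0 : T = 0 := by
          rw [hTdef, Finset.univ_eq_empty, Finset.sum_empty]
        have hSempty : {c : ℝ | ∃ a b : Fin D₁ → ℂ, a ≠ 0 ∧ b ≠ 0 ∧
            c = (lNorm (2 * (recipGap p p)⁻¹) a)⁻¹ * (lNorm (2 * (recipGap p p)⁻¹) b)⁻¹ *
              lNorm p (fun ij : Fin D₁ × Fin D₂ => a ij.1 * v ij.1 ij.2 * b ij.1)} = ∅ := by
          ext c
          simp only [Set.mem_setOf_eq, Set.mem_empty_iff_false, iff_false]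
          rintro ⟨a, b, ha0, -, -⟩
          exact ha0 (funext fun i => isEmptyElim i)
        rw [hSempty, Real.sSup_empty, hT0, Real.zero_rpow (one_div_ne_zero hp'0)]
      · have hones : (fun _ : Fin D₁ => (1 : ℂ)) ≠ 0 := by
          intro h
          have h2 := congrFun h (Classical.arbitrary _)
          simp at h2
        have honeN : lNorm (2 * (recipGap p p)⁻¹) (fun _ : Fin D₁ => (1 : ℂ)) = 1 := by
          rw [hlNs]
          simp
        have hu : lNorm p (fun ij : Fin D₁ × Fin D₂ => (1 : ℂ) * v ij.1 ij.2 * 1) =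
            T ^ (1 / p.toReal) := by
          rw [hlNp]
          congr 1
          rw [hTsum]
          exact Finset.sum_congr rfl fun i _ => Finset.sum_congr rfl fun j _ => by
            rw [one_mul, mul_one]
        have hmem : T ^ (1 / p.toReal) ∈ {c : ℝ | ∃ a b : Fin D₁ → ℂ, a ≠ 0 ∧ b ≠ 0 ∧
            c = (lNorm (2 * (recipGap p p)⁻¹) a)⁻¹ * (lNorm (2 * (recipGap p p)⁻¹) b)⁻¹ *
              lNorm p (fun ij : Fin D₁ × Fin D₂ => a ij.1 * v ij.1 ij.2 * b ij.1)} :=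
          ⟨fun _ => 1, fun _ => 1, hones, hones, by rw [honeN, hu, inv_one, one_mul, one_mul]⟩
        refine le_antisymm (le_csSup ⟨T ^ (1 / p.toReal), ?_⟩ hmem) (csSup_le ⟨_, hmem⟩ ?_)
        · rintro c ⟨a, b, ha0, hb0, rfl⟩
          exact hub a b ha0 hb0
        · rintro c ⟨a, b, ha0, hb0, rfl⟩
          exact hub a b ha0 hb0
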